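/- Let D be a category with finite coproducts and a natural family of isomorphisms θ_X : X + X ≅ X. Then the codiagonal ∇ : X + X → X is an isomorphism for every object X. -/

import Mathlib

open CategoryTheory CategoryTheory.Limits

theorem stmt_7 {D : Type*} [Category D] [HasBinaryCoproducts D]
    (θ : ∀ X : D, X ⨿ X ≅ X)
    (nat : ∀ {X Y : D} (f : X ⟶ Y), coprod.map f f ≫ (θ Y).hom = (θ X).hom ≫ f) :
    ∀ X : D, IsIso (coprod.desc (𝟙 X) (𝟙 X)) := by
  intro X
  have hθ : (θ (X ⨿ X)).hom = coprod.map (θ X).hom (θ X).hom :=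
    ((cancel_mono (θ X).hom).mp (nat (θ X).hom)).symm
  have h1 := nat (coprod.inl : X ⟶ X ⨿ X)
  rw [hθ] at h1
  -- h1 : coprod.map inl inl ≫ coprod.map θ θ = θ ≫ inl
  have key : coprod.desc (𝟙 X) (𝟙 X) ≫ coprod.inl ≫ (θ X).hom = (θ X).hom := by
    have h2 := congrArg (· ≫ coprod.desc (𝟙 X) (𝟙 X)) h1
    simp only [Category.assoc, coprod.map_desc, Category.comp_id, Category.id_comp,
      coprod.desc_comp, Category.assoc] at h2 ⊢
    simpa [coprod.inl_desc] using h2.symm.symm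
  have right : coprod.desc (𝟙 X) (𝟙 X) ≫ coprod.inl = 𝟙 (X ⨿ X) := by
    rw [← cancel_mono (θ X).hom, Category.assoc, key, Category.id_comp]
  exact ⟨coprod.inl, by simpa using right, by simp [coprod.inl_desc]⟩
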